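/- Fix N ≥ 1, μ ∈ ℝ, 𝓔 = diag(ε₁,…,ε_N) with εₚ ∈ {+1,−1}, a matrix J ∈ M_N(ℂ), and a continuous Q : ℝ → M_N(ℂ). Suppose Ψ, Φ : ℝ → M_N(ℂ) are differentiable, Ψ(x) is invertible for all x, and: (i) i Ψ′(x) + (μ Q(x) − μ² J) Ψ(x) = 0; (ii) i Φ′(x) + (Q(x) − 2μJ) Ψ(x) + (μ Q(x) − μ² J) Φ(x) = 0; (iii) 𝓔 Ψ(x)† 𝓔 = Ψ(x)⁻¹ for all x. Let F₀ ∈ ℂᴺ, define the row vector Fᵀ(x) = F₀ᵀ Ψ(x)⁻¹, and let α : ℝ → ℂ be differentiable with i α′(x) = Fᵀ(x) (Q(x) − 2μJ) 𝓔 conj(F(x)) for all x. Then the function x ↦ α(x) + Fᵀ(x) Φ(x) 𝓔 conj(F₀) is constant on ℝ. -/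

import Mathlib

noncomputable section

open Matrix

/-- Entrywise derivative of a matrix-valued function on `ℝ`. -/
def matDeriv {N : ℕ} (M : ℝ → Matrix (Fin N) (Fin N) ℂ) (x : ℝ) : Matrix (Fin N) (Fin N) ℂ :=
  Matrix.of fun j k => deriv (fun y => M y j k) x

/-- Entrywise differentiability of a matrix-valued function on `ℝ`. -/
def MatDifferentiable {N : ℕ} (M : ℝ → Matrix (Fin N) (Fin N) ℂ) : Prop :=
  ∀ j k, Differentiable ℝ fun y => M y j k

lemma hasDerivAt_entry {N : ℕ} {M : ℝ → Matrix (Fin N) (Fin N) ℂ}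
    (hM : MatDifferentiable M) (j k : Fin N) (x : ℝ) :
    HasDerivAt (fun y => M y j k) (matDeriv M x j k) x :=
  ((hM j k) x).hasDerivAt

lemma MatDifferentiable.mul' {N : ℕ} {A B : ℝ → Matrix (Fin N) (Fin N) ℂ}
    (hA : MatDifferentiable A) (hB : MatDifferentiable B) :
    MatDifferentiable (fun y => A y * B y) := by
  intro j k
  simp only [Matrix.mul_apply]
  exact Differentiable.fun_sum fun l _ => (hA j l).mul (hB l k)

lemma matDeriv_mul {N : ℕ} {A B : ℝ → Matrix (Fin N) (Fin N) ℂ}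
    (hA : MatDifferentiable A) (hB : MatDifferentiable B) (x : ℝ) :
    matDeriv (fun y => A y * B y) x = matDeriv A x * B x + A x * matDeriv B x := by
  ext j k
  have h : HasDerivAt (fun y => ∑ l, A y j l * B y l k)
      (∑ l, (matDeriv A x j l * B x l k + A x j l * matDeriv B x l k)) x :=
    HasDerivAt.fun_sum fun l _ => (hasDerivAt_entry hA j l x).mul (hasDerivAt_entry hB l k x)
  show deriv (fun y => (A y * B y) j k) x = _
  simp only [Matrix.mul_apply]
  rw [h.deriv]
  simp [Matrix.mul_apply, Matrix.add_apply, Finset.sum_add_distrib]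

lemma hasDerivAt_bilin {N : ℕ} (u v : Fin N → ℂ) {W : ℝ → Matrix (Fin N) (Fin N) ℂ}
    (hW : MatDifferentiable W) (x : ℝ) :
    HasDerivAt (fun y => dotProduct (Matrix.vecMul u (W y)) v)
      (dotProduct (Matrix.vecMul u (matDeriv W x)) v) x := by
  simp only [dotProduct, Matrix.vecMul]
  exact HasDerivAt.fun_sum fun k _ =>
    (HasDerivAt.fun_sum fun j _ =>
      (hasDerivAt_entry hW j k x).const_mul (u j)).mul_const (v k)

theorem alpha_representation {N : ℕ} (hN : 1 ≤ N) (μ : ℝ)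
    (ε : Fin N → ℝ) (hε : ∀ p, ε p = 1 ∨ ε p = -1)
    (E : Matrix (Fin N) (Fin N) ℂ) (hE : E = Matrix.diagonal fun p => (ε p : ℂ))
    (J : Matrix (Fin N) (Fin N) ℂ)
    (Q : ℝ → Matrix (Fin N) (Fin N) ℂ) (hQc : Continuous Q)
    (Ψ Φ : ℝ → Matrix (Fin N) (Fin N) ℂ)
    (hΨd : MatDifferentiable Ψ) (hΦd : MatDifferentiable Φ)
    (hΨinv : ∀ x, IsUnit (Ψ x))
    (hΨ : ∀ x, Complex.I • matDeriv Ψ x + ((μ : ℂ) • Q x - ((μ : ℂ)) ^ 2 • J) * Ψ x = 0)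
    (hΦ : ∀ x, Complex.I • matDeriv Φ x + (Q x - (2 * (μ : ℂ)) • J) * Ψ x
        + ((μ : ℂ) • Q x - ((μ : ℂ)) ^ 2 • J) * Φ x = 0)
    (hred : ∀ x, E * (Ψ x)ᴴ * E = (Ψ x)⁻¹)
    (F₀ : Fin N → ℂ)
    (F : ℝ → Fin N → ℂ) (hF : ∀ x, F x = Matrix.vecMul F₀ (Ψ x)⁻¹)
    (α : ℝ → ℂ) (hαd : Differentiable ℝ α)
    (hα : ∀ x, Complex.I * deriv α x =
      dotProduct (Matrix.vecMul (F x) ((Q x - (2 * (μ : ℂ)) • J) * E)) (star (F x))) :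
    ∀ x y : ℝ,
      α x + dotProduct (Matrix.vecMul (F x) (Φ x * E)) (star F₀)
        = α y + dotProduct (Matrix.vecMul (F y) (Φ y * E)) (star F₀) := by
  -- notation
  set A : ℝ → Matrix (Fin N) (Fin N) ℂ := fun x => (μ : ℂ) • Q x - ((μ : ℂ)) ^ 2 • J with hA
  set B : ℝ → Matrix (Fin N) (Fin N) ℂ := fun x => Q x - (2 * (μ : ℂ)) • J with hB
  set Ψi : ℝ → Matrix (Fin N) (Fin N) ℂ := fun x => (Ψ x)⁻¹ with hΨi
  have hdet : ∀ x, IsUnit (Ψ x).det := fun x =>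
    (Matrix.isUnit_iff_isUnit_det (Ψ x)).1 (hΨinv x)
  have hΨiΨ : ∀ x, Ψi x * Ψ x = 1 := fun x => Matrix.nonsing_inv_mul (Ψ x) (hdet x)
  have hΨΨi : ∀ x, Ψ x * Ψi x = 1 := fun x => Matrix.mul_nonsing_inv (Ψ x) (hdet x)
  -- E properties
  have hEE : E * E = 1 := by
    rw [hE, Matrix.diagonal_mul_diagonal]
    have h1 : (fun i => (ε i : ℂ) * (ε i : ℂ)) = fun _ => (1 : ℂ) := by
      funext p
      rcases hε p with h | h <;> norm_num [h]
    rw [h1, Matrix.diagonal_one]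
  have hEH : Eᴴ = E := by
    rw [hE, Matrix.diagonal_conjTranspose]
    have h1 : star (fun p => (ε p : ℂ)) = fun p => (ε p : ℂ) := by
      funext p
      simp [Complex.conj_ofReal]
    rw [h1]
  -- differentiability of Ψi via the reduction
  have hΨHd : MatDifferentiable (fun y => (Ψ y)ᴴ) := by
    intro j k
    simp only [Matrix.conjTranspose_apply]
    exact (hΨd k j).star
  have hEd : MatDifferentiable (fun _ : ℝ => E) := fun j k => differentiable_const _
  have hΨid : MatDifferentiable Ψi := by
    have h1 : MatDifferentiable (fun y => E * (Ψ y)ᴴ * E) :=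
      (hEd.mul' hΨHd).mul' hEd
    intro j k
    have : (fun y => Ψi y j k) = fun y => (E * (Ψ y)ᴴ * E) j k := by
      funext y; rw [hred y]
    rw [this]
    exact h1 j k
  -- derivative formulas
  have hΨ' : ∀ x, matDeriv Ψ x = Complex.I • (A x * Ψ x) := by
    intro x
    have h : Complex.I • matDeriv Ψ x + A x * Ψ x = 0 := hΨ x
    have : Complex.I • matDeriv Ψ x = -(A x * Ψ x) := by
      linear_combination (norm := module) h
    calc matDeriv Ψ x = (-Complex.I) • (Complex.I • matDeriv Ψ x) := by
          rw [smul_smul]; simp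
      _ = (-Complex.I) • (-(A x * Ψ x)) := by rw [this]
      _ = Complex.I • (A x * Ψ x) := by rw [smul_neg, neg_smul, neg_neg]
  have hΦ' : ∀ x, matDeriv Φ x = Complex.I • (B x * Ψ x + A x * Φ x) := by
    intro x
    have h : Complex.I • matDeriv Φ x + B x * Ψ x + A x * Φ x = 0 := hΦ x
    have : Complex.I • matDeriv Φ x = -(B x * Ψ x + A x * Φ x) := by
      linear_combination (norm := module) h
    calc matDeriv Φ x = (-Complex.I) • (Complex.I • matDeriv Φ x) := by
          rw [smul_smul]; simp
      _ = (-Complex.I) • (-(B x * Ψ x + A x * Φ x)) := by rw [this]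
      _ = Complex.I • (B x * Ψ x + A x * Φ x) := by rw [smul_neg, neg_smul, neg_neg]
  -- derivative of the inverse
  have hΨi' : ∀ x, matDeriv Ψi x = -(Complex.I • (Ψi x * A x)) := by
    intro x
    have hone : matDeriv (fun y => Ψi y * Ψ y) x = 0 := by
      have : (fun y => Ψi y * Ψ y) = fun _ => (1 : Matrix (Fin N) (Fin N) ℂ) := by
        funext y; exact hΨiΨ y
      rw [this]
      ext j k
      show deriv (fun _ : ℝ => (1 : Matrix (Fin N) (Fin N) ℂ) j k) x = 0
      simp
    rw [matDeriv_mul hΨid hΨd x] at hone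
    have h2 : matDeriv Ψi x * Ψ x = -(Ψi x * matDeriv Ψ x) := by
      linear_combination (norm := module) hone
    have h3 : matDeriv Ψi x * Ψ x * Ψi x = -(Ψi x * matDeriv Ψ x) * Ψi x := by
      rw [h2]
    rw [Matrix.mul_assoc, hΨΨi x, Matrix.mul_one] at h3
    have key : Ψi x * (A x * Ψ x) * Ψi x = Ψi x * A x := by
      rw [Matrix.mul_assoc (Ψi x) (A x * Ψ x) (Ψi x),
        Matrix.mul_assoc (A x) (Ψ x) (Ψi x), hΨΨi x, Matrix.mul_one]
    rw [h3, hΨ' x, Matrix.mul_smul, neg_mul, Matrix.smul_mul, key]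
  -- the matrix W
  set W : ℝ → Matrix (Fin N) (Fin N) ℂ := fun y => Ψi y * Φ y * E with hW
  have hWd : MatDifferentiable W := (hΨid.mul' hΦd).mul' hEd
  have hW' : ∀ x, matDeriv W x = Complex.I • (Ψi x * B x * Ψ x * E) := by
    intro x
    have hEconst : matDeriv (fun _ : ℝ => E) x = 0 := by
      ext j k
      show deriv (fun _ : ℝ => E j k) x = 0
      simp
    rw [hW]
    rw [matDeriv_mul (hΨid.mul' hΦd) hEd x, hEconst, Matrix.mul_zero, add_zero,
      matDeriv_mul hΨid hΦd x, hΨi' x, hΦ' x]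
    simp only [Matrix.smul_mul, Matrix.mul_smul, neg_mul, Matrix.mul_add, Matrix.add_mul,
      smul_add, Matrix.mul_assoc, Matrix.neg_mul]
    abel
  -- the bilinear form term equals the W-form
  have hterm : ∀ x, dotProduct (Matrix.vecMul (F x) (Φ x * E)) (star F₀)
      = dotProduct (Matrix.vecMul F₀ (W x)) (star F₀) := by
    intro x
    rw [hF x, Matrix.vecMul_vecMul, ← Matrix.mul_assoc]
  -- the derivative of α in terms of W
  have hstarF : ∀ x, star (F x) = (E * Ψ x * E) *ᵥ star F₀ := by
    intro x
    rw [hF x, Matrix.star_vecMul]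
    congr 1
    rw [← hred x]
    rw [Matrix.conjTranspose_mul, Matrix.conjTranspose_mul, hEH,
      Matrix.conjTranspose_conjTranspose, ← Matrix.mul_assoc]
  have hαderiv : ∀ x, Complex.I * deriv α x
      = dotProduct (Matrix.vecMul F₀ (Ψi x * B x * Ψ x * E)) (star F₀) := by
    intro x
    rw [hα x, hstarF x, Matrix.dotProduct_mulVec, hF x]
    rw [Matrix.vecMul_vecMul, Matrix.vecMul_vecMul]
    congr 1
    have hm : (Ψ x)⁻¹ * (B x * E * (E * Ψ x * E)) = Ψi x * B x * Ψ x * E := by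
      simp only [Matrix.mul_assoc]
      rw [← Matrix.mul_assoc E E (Ψ x * E), hEE, Matrix.one_mul]
    exact congrArg (fun M => Matrix.vecMul F₀ M) hm
  -- the function g has zero derivative
  set g : ℝ → ℂ := fun y => α y + dotProduct (Matrix.vecMul F₀ (W y)) (star F₀) with hg
  have hgderiv : ∀ x, HasDerivAt g 0 x := by
    intro x
    have h1 : HasDerivAt α (deriv α x) x := (hαd x).hasDerivAt
    have h2 := hasDerivAt_bilin F₀ (star F₀) hWd x
    have h3 := h1.add h2
    convert h3 using 1
    case e'_4 => rfl
    case e'_8 => rfl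
    rw [hW' x]
    have hsm : Matrix.vecMul F₀ (Complex.I • (Ψi x * B x * Ψ x * E))
        = Complex.I • Matrix.vecMul F₀ (Ψi x * B x * Ψ x * E) := by
      funext k
      simp only [Matrix.vecMul, dotProduct, Matrix.smul_apply, Pi.smul_apply,
        smul_eq_mul, Finset.mul_sum]
      exact Finset.sum_congr rfl fun j _ => by ring
    rw [hsm, smul_dotProduct, smul_eq_mul, ← hαderiv x]
    rw [← mul_assoc, Complex.I_mul_I]
    ring
  have hconst : ∀ x y, g x = g y :=
    is_const_of_deriv_eq_zero (fun x => (hgderiv x).differentiableAt)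
      (fun x => (hgderiv x).deriv)
  intro x y
  have := hconst x y
  rw [hg] at this
  simpa [hterm x, hterm y] using this
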